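/- Let C = k(k+1)/2 + r with 0 ≤ r ≤ k, and let H be a digraph on vertex set Z_p whose arcs are routed clockwise via shortest directed paths on the cycle C⃗_p, with the load of every cycle-arc at most C. If γ denotes the number of arcs of H, then γ ≤ kp + rp/(k+1), i.e., (k+1)γ ≤ (k(k+1)+r)p. -/

import Mathlib

/-- The load induced on the arc of the directed cycle `C⃗_p` going from `t` to `t+1`
by a set `S` of requests, each request `(i,j)` being routed clockwise from `i` to `j`. -/
def cload (p : ℕ) (S : Finset (ZMod p × ZMod p)) (t : ZMod p) : ℕ :=
  (S.filter fun a => (t - a.1).val < (a.2 - a.1).val).card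

theorem stmt_5 (p C k r : ℕ) (hp : 0 < p) (hr : r ≤ k)
    (hC : C = k * (k + 1) / 2 + r)
    (S : Finset (ZMod p × ZMod p))
    (hS : ∀ a ∈ S, a.1 ≠ a.2)
    (hload : ∀ t : ZMod p, cload p S t ≤ C) :
    (k + 1) * S.card ≤ (k * (k + 1) + r) * p := by
  haveI : NeZero p := ⟨hp.ne'⟩
  classical
  set ℓ : ZMod p × ZMod p → ℕ := fun a => (a.2 - a.1).val with hℓdef
  have hℓpos : ∀ a ∈ S, 1 ≤ ℓ a := by
    intro a ha
    have h1 : a.2 - a.1 ≠ 0 := sub_ne_zero.mpr (Ne.symm (hS a ha))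
    have h2 : (a.2 - a.1).val ≠ 0 := fun h => h1 ((ZMod.val_eq_zero _).mp h)
    exact Nat.one_le_iff_ne_zero.mpr h2
  -- the number of cycle arcs loaded by a request equals its length
  have hcount : ∀ a : ZMod p × ZMod p,
      (Finset.univ.filter fun t : ZMod p => (t - a.1).val < ℓ a).card = ℓ a := by
    intro a
    have hv : ℓ a < p := ZMod.val_lt _
    have : (Finset.univ.filter fun t : ZMod p => (t - a.1).val < ℓ a).card
        = (Finset.range (ℓ a)).card := by
      apply Finset.card_nbij' (fun t => (t - a.1).val) (fun j => (j : ZMod p) + a.1)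
      · intro t ht
        simp only [Finset.coe_filter, Finset.mem_coe, Finset.mem_filter] at ht
        simpa using ht.2
      · intro j hj
        simp only [Finset.coe_range, Finset.mem_coe, Finset.mem_range, Set.mem_Iio] at hj
        simp only [Finset.coe_filter, Finset.mem_coe, Finset.mem_filter, Finset.mem_univ, true_and, add_sub_cancel_right, Set.mem_setOf_eq]
        rwa [ZMod.val_natCast_of_lt (lt_trans hj hv)]
      · intro t _
        simp [ZMod.natCast_val, ZMod.cast_id]
      · intro j hj
        simp only [Finset.coe_range, Finset.mem_coe, Finset.mem_range, Set.mem_Iio] at hj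
        show ((j : ZMod p) + a.1 - a.1).val = j
        rw [add_sub_cancel_right, ZMod.val_natCast_of_lt (lt_trans hj hv)]
    rw [this, Finset.card_range]
  -- total load equals the sum of the lengths
  have htot : ∑ a ∈ S, ℓ a ≤ C * p := by
    have h1 : ∑ t : ZMod p, cload p S t = ∑ a ∈ S, ℓ a := by
      have h0 : ∀ t : ZMod p, cload p S t
          = ∑ a ∈ S, if (t - a.1).val < ℓ a then 1 else 0 := by
        intro t; exact Finset.card_filter _ _
      rw [Finset.sum_congr rfl fun t _ => h0 t, Finset.sum_comm]
      refine Finset.sum_congr rfl fun a _ => ?_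
      rw [← Finset.card_filter]
      exact hcount a
    calc ∑ a ∈ S, ℓ a = ∑ t : ZMod p, cload p S t := h1.symm
      _ ≤ ∑ _t : ZMod p, C := Finset.sum_le_sum fun t _ => hload t
      _ = C * p := by
          rw [Finset.sum_const, Finset.card_univ, ZMod.card, smul_eq_mul, mul_comm]
  -- at most p arcs of each length
  have hfiber : ∀ i : ℕ, (S.filter fun a => ℓ a = i).card ≤ p := by
    intro i
    have hinj : Set.InjOn (Prod.fst : ZMod p × ZMod p → ZMod p) ↑(S.filter fun a => ℓ a = i) := by
      intro a ha b hb hab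
      simp only [Finset.coe_filter, Set.mem_setOf_eq] at ha hb
      have hd : a.2 - a.1 = b.2 - b.1 :=
        ZMod.val_injective p (by rw [ha.2, hb.2] : ℓ a = ℓ b)
      have h2 : a.2 = b.2 := by
        have := congrArg (· + a.1) hd
        simpa [hab, sub_add_cancel] using this
      exact Prod.ext hab h2
    calc (S.filter fun a => ℓ a = i).card
        ≤ (Finset.univ : Finset (ZMod p)).card :=
          Finset.card_le_card_of_injOn Prod.fst (fun a _ => Finset.mem_univ _) hinj
      _ = p := by rw [Finset.card_univ, ZMod.card]
  set A := S.filter (fun a => ℓ a ≤ k) with hA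
  set B := S.filter (fun a => ¬ ℓ a ≤ k) with hB
  have hcardS : A.card + B.card = S.card :=
    Finset.card_filter_add_card_filter_not _
  have hsumS : ∑ a ∈ A, ℓ a + ∑ a ∈ B, ℓ a = ∑ a ∈ S, ℓ a :=
    Finset.sum_filter_add_sum_filter_not _ _ _
  have hBle : (k + 1) * B.card ≤ ∑ a ∈ B, ℓ a := by
    calc (k + 1) * B.card = ∑ _a ∈ B, (k + 1) := by
          rw [Finset.sum_const, smul_eq_mul, mul_comm]
      _ ≤ ∑ a ∈ B, ℓ a := Finset.sum_le_sum fun a ha => by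
          simp only [hB, Finset.mem_filter] at ha; omega
  have hAeq : (k + 1) * A.card = ∑ a ∈ A, (k + 1 - ℓ a) + ∑ a ∈ A, ℓ a := by
    rw [← Finset.sum_add_distrib]
    calc (k + 1) * A.card = ∑ _a ∈ A, (k + 1) := by
          rw [Finset.sum_const, smul_eq_mul, mul_comm]
      _ = ∑ a ∈ A, (k + 1 - ℓ a + ℓ a) := Finset.sum_congr rfl fun a ha => by
          simp only [hA, Finset.mem_filter] at ha; omega
  -- Gauss sum
  have hgauss : ∑ i ∈ Finset.Icc 1 k, (k + 1 - i) = k * (k + 1) / 2 := by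
    have h1 : ∑ i ∈ Finset.Icc 1 k, (k + 1 - i) = ∑ i ∈ Finset.Icc 1 k, i := by
      refine Finset.sum_nbij' (fun i => k + 1 - i) (fun i => k + 1 - i) ?_ ?_ ?_ ?_ ?_ <;>
        (intro i hi; simp only [Finset.mem_Icc] at *) <;> omega
    have h2 : ∀ n : ℕ, (∑ i ∈ Finset.Icc 1 n, i) = n * (n + 1) / 2 := by
      intro n
      induction n with
      | zero => simp
      | succ n ih =>
        rw [Finset.sum_Icc_succ_top (Nat.succ_le_succ (Nat.zero_le n)), ih,
          show (n + 1) * (n + 1 + 1) = n * (n + 1) + (n + 1) * 2 by ring,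
          Nat.add_mul_div_right _ _ (by norm_num)]
    rw [h1, h2 k]
  -- the slack bound
  have hslack : ∑ a ∈ A, (k + 1 - ℓ a) ≤ (k * (k + 1) / 2) * p := by
    have hmaps : ∀ a ∈ A, ℓ a ∈ Finset.Icc 1 k := fun a ha => by
      simp only [hA, Finset.mem_filter] at ha
      exact Finset.mem_Icc.mpr ⟨hℓpos a ha.1, ha.2⟩
    rw [← Finset.sum_fiberwise_of_maps_to hmaps (fun a => k + 1 - ℓ a)]
    calc ∑ i ∈ Finset.Icc 1 k, ∑ a ∈ A.filter (fun a => ℓ a = i), (k + 1 - ℓ a)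
        ≤ ∑ i ∈ Finset.Icc 1 k, (k + 1 - i) * p := by
          apply Finset.sum_le_sum; intro i hi
          have hsub : A.filter (fun a => ℓ a = i) ⊆ S.filter (fun a => ℓ a = i) :=
            Finset.filter_subset_filter _ (Finset.filter_subset _ _)
          calc ∑ a ∈ A.filter (fun a => ℓ a = i), (k + 1 - ℓ a)
              = ∑ a ∈ A.filter (fun a => ℓ a = i), (k + 1 - i) :=
                Finset.sum_congr rfl fun a ha => by
                  simp only [Finset.mem_filter] at ha; rw [ha.2]
            _ = (A.filter (fun a => ℓ a = i)).card * (k + 1 - i) := by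
                rw [Finset.sum_const, smul_eq_mul]
            _ ≤ p * (k + 1 - i) :=
                Nat.mul_le_mul_right _ (le_trans (Finset.card_le_card hsub) (hfiber i))
            _ = (k + 1 - i) * p := mul_comm _ _
      _ = (k * (k + 1) / 2) * p := by rw [← Finset.sum_mul, hgauss]
  -- assemble
  calc (k + 1) * S.card = (k + 1) * A.card + (k + 1) * B.card := by
        rw [← hcardS]; ring
    _ ≤ (∑ a ∈ A, (k + 1 - ℓ a) + ∑ a ∈ A, ℓ a) + ∑ a ∈ B, ℓ a := by
        rw [hAeq]; exact Nat.add_le_add_left hBle _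
    _ = ∑ a ∈ A, (k + 1 - ℓ a) + ∑ a ∈ S, ℓ a := by rw [add_assoc, hsumS]
    _ ≤ (k * (k + 1) / 2) * p + C * p := Nat.add_le_add hslack htot
    _ = (k * (k + 1) + r) * p := by
        obtain ⟨M, hM⟩ := Nat.even_mul_succ_self k
        rw [hC, hM, show (M + M) / 2 = M from by omega]; ring
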